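/- Let ABC be a nondegenerate triangle with side lengths a = dist(B,C), b = dist(C,A), c = dist(A,B), and let λ_A, λ_B, λ_C > 0. If there exists a point P in the plane with dist(P,A) : dist(P,B) : dist(P,C) = λ_A : λ_B : λ_C (i.e., dist(P,A) = λ_A t, dist(P,B) = λ_B t, dist(P,C) = λ_C t for some t > 0), then the three numbers λ_A·a, λ_B·b, λ_C·c satisfy the triangle inequality: λ_A·a ≤ λ_B·b + λ_C·c, λ_B·b ≤ λ_C·c + λ_A·a, and λ_C·c ≤ λ_A·a + λ_B·b. -/

import Mathlib

/-- If some point `P` has distances to the vertices proportional to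
`(λ_A, λ_B, λ_C)`, then `(λ_A a, λ_B b, λ_C c)` satisfy the triangle
inequalities. -/
theorem stmt_8 (A B C P : EuclideanSpace ℝ (Fin 2))
    (hABC : AffineIndependent ℝ ![A, B, C])
    (a b c : ℝ) (ha : a = dist B C) (hb : b = dist C A) (hc : c = dist A B)
    (lA lB lC : ℝ) (hlA : 0 < lA) (hlB : 0 < lB) (hlC : 0 < lC)
    (t : ℝ) (ht : 0 < t)
    (hPA : dist P A = lA * t) (hPB : dist P B = lB * t) (hPC : dist P C = lC * t) :
    lA * a ≤ lB * b + lC * c ∧ lB * b ≤ lC * c + lA * a ∧ lC * c ≤ lA * a + lB * b := by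
  have h1 := EuclideanGeometry.mul_dist_le_mul_dist_add_mul_dist B P C A
  have h2 := EuclideanGeometry.mul_dist_le_mul_dist_add_mul_dist C P A B
  have h3 := EuclideanGeometry.mul_dist_le_mul_dist_add_mul_dist A P B C
  simp only [dist_comm B P, dist_comm C P, dist_comm A P, dist_comm B A,
    dist_comm C B, dist_comm A C, hPA, hPB, hPC] at h1 h2 h3
  subst ha hb hc
  refine ⟨?_, ?_, ?_⟩ <;> [skip; skip; skip] <;>
    rw [← mul_le_mul_iff_of_pos_right ht] <;> nlinarith [dist_nonneg (x := B) (y := C),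
      dist_nonneg (x := C) (y := A), dist_nonneg (x := A) (y := B)]
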